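/- For every ε with 0 ≤ ε ≤ 0.689 and every x with |x| ≤ ε and x < 1, one has 2 arccos(x)/(π(1 - x)) ≥ 2 arccos(-ε)/(π(1 + ε)). -/

import Mathlib

open Real

open Finset in
lemma cos_bound8 {x : ℝ} (hx : |x| ≤ 1) :
    |Real.cos x - (1 - x ^ 2 / 2 + x ^ 4 / 24 - x ^ 6 / 720)| ≤ |x| ^ 8 * (9 / 322560) := by
  have hx1 : ‖(x:ℂ) * Complex.I‖ ≤ 1 := by simpa
  have hx2 : ‖-(x:ℂ) * Complex.I‖ ≤ 1 := by simpa
  have h1 := Complex.exp_bound hx1 (n := 8) (by norm_num)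
  have h2 := Complex.exp_bound hx2 (n := 8) (by norm_num)
  have hsum : (∑ m ∈ range 8, ((x:ℂ) * Complex.I) ^ m / m.factorial)
      + (∑ m ∈ range 8, (-(x:ℂ) * Complex.I) ^ m / m.factorial)
      = 2 * (1 - (x:ℂ) ^ 2 / 2 + (x:ℂ) ^ 4 / 24 - (x:ℂ) ^ 6 / 720) := by
    simp only [Finset.sum_range_succ, range_zero, sum_empty, Nat.factorial]
    push_cast
    have hI6 : Complex.I ^ 6 = -1 := by
      rw [show (6:ℕ) = 2*3 by norm_num, pow_mul, Complex.I_sq]; norm_num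
    apply Complex.ext <;> simp [div_eq_mul_inv, Complex.normSq] <;> ring_nf <;>
      simp [hI6, pow_succ, Complex.mul_re, Complex.mul_im] <;> ring
  have hcoseq : Complex.cos x - ((1:ℂ) - (x:ℂ) ^ 2 / 2 + (x:ℂ) ^ 4 / 24 - (x:ℂ) ^ 6 / 720)
      = ((Complex.exp ((x:ℂ) * Complex.I) - ∑ m ∈ range 8, ((x:ℂ) * Complex.I) ^ m / m.factorial)
        + (Complex.exp (-(x:ℂ) * Complex.I)
            - ∑ m ∈ range 8, (-(x:ℂ) * Complex.I) ^ m / m.factorial)) / 2 := by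
    simp only [Complex.cos]
    linear_combination (1/2 : ℂ) * hsum
  have e1 : ‖(x:ℂ) * Complex.I‖ = |x| := by simp
  have e2 : ‖-(x:ℂ) * Complex.I‖ = |x| := by simp
  rw [e1] at h1
  rw [e2] at h2
  calc |Real.cos x - (1 - x ^ 2 / 2 + x ^ 4 / 24 - x ^ 6 / 720)|
      = ‖(Complex.cos x
          - ((1:ℂ) - (x:ℂ) ^ 2 / 2 + (x:ℂ) ^ 4 / 24 - (x:ℂ) ^ 6 / 720))‖ := by
        rw [← Real.norm_eq_abs, ← Complex.norm_real]
        congr 1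
        push_cast [Complex.ofReal_cos]
        ring
    _ = ‖((Complex.exp ((x:ℂ) * Complex.I)
          - ∑ m ∈ range 8, ((x:ℂ) * Complex.I) ^ m / m.factorial)
        + (Complex.exp (-(x:ℂ) * Complex.I)
          - ∑ m ∈ range 8, (-(x:ℂ) * Complex.I) ^ m / m.factorial))‖ / 2 := by
        rw [hcoseq, norm_div]
        norm_num
    _ ≤ (‖(Complex.exp ((x:ℂ) * Complex.I)
          - ∑ m ∈ range 8, ((x:ℂ) * Complex.I) ^ m / m.factorial)‖
        + ‖(Complex.exp (-(x:ℂ) * Complex.I)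
          - ∑ m ∈ range 8, (-(x:ℂ) * Complex.I) ^ m / m.factorial)‖) / 2 := by
        gcongr
        exact norm_add_le _ _
    _ ≤ (|x| ^ 8 * ((Nat.succ 8 : ℝ) * ((Nat.factorial 8 : ℕ) * (8:ℕ) : ℝ)⁻¹)
        + |x| ^ 8 * ((Nat.succ 8 : ℝ) * ((Nat.factorial 8 : ℕ) * (8:ℕ) : ℝ)⁻¹)) / 2 := by
        gcongr
    _ ≤ |x| ^ 8 * (9 / 322560) := by
        norm_num [Nat.factorial]

lemma cos_r_ge : -(689/1000 : ℝ) ≤ Real.cos (4661/2000) := by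
  have h3 : (4661/2000 : ℝ) = 3 * (4661/6000) := by norm_num
  rw [h3, Real.cos_three_mul]
  set c := Real.cos (4661/6000 : ℝ) with hc
  have hb := cos_bound8 (x := (4661/6000 : ℝ)) (by rw [abs_of_nonneg (by norm_num)]; norm_num)
  rw [abs_of_nonneg (by norm_num : (0:ℝ) ≤ 4661/6000), abs_sub_le_iff] at hb
  obtain ⟨hA, hB⟩ := hb
  have hlo : (71313/100000 : ℝ) ≤ c := by nlinarith [hA, hB]
  have hhi : c ≤ (71314/100000 : ℝ) := by nlinarith [hA, hB]
  nlinarith [hlo, hhi, sq_nonneg (c - 71313/100000), sq_nonneg (c + 71313/100000),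
    mul_nonneg (sub_nonneg.2 hlo) (sub_nonneg.2 hlo)]

lemma psi_mono : MonotoneOn (fun t : ℝ => t * Real.sin t + Real.cos t) (Set.Icc 0 (π/2)) := by
  have hd : ∀ t : ℝ, HasDerivAt (fun t : ℝ => t * Real.sin t + Real.cos t)
      (1 * Real.sin t + t * Real.cos t + -Real.sin t) t := fun t =>
    ((hasDerivAt_id t).mul (Real.hasDerivAt_sin t)).add (Real.hasDerivAt_cos t)
  apply monotoneOn_of_deriv_nonneg (convex_Icc _ _)
  · exact (Continuous.continuousOn (by continuity))
  · intro t _; exact (hd t).differentiableAt.differentiableWithinAt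
  · intro t ht
    rw [interior_Icc] at ht
    rw [(hd t).deriv]
    have h1 : 0 ≤ Real.cos t := Real.cos_nonneg_of_mem_Icc
      ⟨by linarith [ht.1, pi_pos], ht.2.le⟩
    nlinarith [mul_nonneg ht.1.le h1]

lemma psi_anti : AntitoneOn (fun t : ℝ => t * Real.sin t + Real.cos t) (Set.Icc (π/2) π) := by
  have hd : ∀ t : ℝ, HasDerivAt (fun t : ℝ => t * Real.sin t + Real.cos t)
      (1 * Real.sin t + t * Real.cos t + -Real.sin t) t := fun t =>
    ((hasDerivAt_id t).mul (Real.hasDerivAt_sin t)).add (Real.hasDerivAt_cos t)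
  apply antitoneOn_of_deriv_nonpos (convex_Icc _ _)
  · exact (Continuous.continuousOn (by continuity))
  · intro t _; exact (hd t).differentiableAt.differentiableWithinAt
  · intro t ht
    rw [interior_Icc] at ht
    rw [(hd t).deriv]
    have h1 : Real.cos t ≤ 0 := Real.cos_nonpos_of_pi_div_two_le_of_le ht.1.le
      (by linarith [ht.2, pi_pos])
    have h2 : 0 ≤ t := by linarith [ht.1, pi_pos]
    nlinarith [mul_nonpos_of_nonneg_of_nonpos h2 h1]

lemma psi_nonneg {θ : ℝ} (h0 : 0 ≤ θ) (hπ : θ ≤ π) (hcos : -(689/1000 : ℝ) ≤ Real.cos θ) :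
    1 - Real.cos θ ≤ θ * Real.sin θ := by
  have key : 1 ≤ θ * Real.sin θ + Real.cos θ := by
    rcases le_total θ (π/2) with hle | hge
    · have h := psi_mono (Set.mem_Icc.2 ⟨le_refl 0, by linarith [pi_pos]⟩)
        (Set.mem_Icc.2 ⟨h0, hle⟩) h0
      simpa using h
    · set θ₀ := Real.arccos (-(689/1000 : ℝ)) with hθ₀
      have hθθ₀ : θ ≤ θ₀ := by
        have he : θ = Real.arccos (Real.cos θ) := (Real.arccos_cos h0 hπ).symm
        rw [he, hθ₀, Real.arccos, Real.arccos]
        have := Real.monotone_arcsin hcos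
        linarith
      have hθ₀π : θ₀ ≤ π := Real.arccos_le_pi _
      have hπ2θ₀ : π/2 ≤ θ₀ := by
        rw [hθ₀, Real.arccos]
        have : Real.arcsin (-(689/1000 : ℝ)) ≤ 0 := Real.arcsin_nonpos.2 (by norm_num)
        linarith
      have hanti := psi_anti (Set.mem_Icc.2 ⟨hge, hπ⟩) (Set.mem_Icc.2 ⟨hπ2θ₀, hθ₀π⟩) hθθ₀
      have hcosθ₀ : Real.cos θ₀ = -(689/1000 : ℝ) :=
        Real.cos_arccos (by norm_num) (by norm_num)
      have hsinθ₀ : Real.sin θ₀ = Real.sqrt (525279/1000000 : ℝ) := by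
        rw [hθ₀, Real.sin_arccos]
        norm_num
      have hr : (4661/2000 : ℝ) ≤ θ₀ := by
        have h1 : (4661/2000:ℝ) = Real.arccos (Real.cos (4661/2000)) :=
          (Real.arccos_cos (by norm_num) (by linarith [Real.pi_gt_d6])).symm
        rw [h1, hθ₀, Real.arccos, Real.arccos]
        have := Real.monotone_arcsin cos_r_ge
        linarith
      have hs : (72475/100000 : ℝ) ≤ Real.sqrt (525279/1000000 : ℝ) := by
        rw [show (72475/100000:ℝ) = Real.sqrt ((72475/100000)^2) from
          (Real.sqrt_sq (by norm_num)).symm]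
        apply Real.sqrt_le_sqrt
        norm_num
      have h1 : 1 ≤ θ₀ * Real.sin θ₀ + Real.cos θ₀ := by
        rw [hcosθ₀, hsinθ₀]
        have hmul : (4661/2000 : ℝ) * (72475/100000) ≤ θ₀ * Real.sqrt (525279/1000000) :=
          mul_le_mul hr hs (by norm_num) (by linarith)
        linarith [hmul]
      have : θ₀ * Real.sin θ₀ + Real.cos θ₀ ≤ θ * Real.sin θ + Real.cos θ := hanti
      linarith
  linarith

lemma key_ineq {x : ℝ} (h1 : -(689/1000 : ℝ) ≤ x) (h2 : x ≤ 1) :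
    1 - x ≤ Real.arccos x * Real.sqrt (1 - x ^ 2) := by
  have hx1 : -1 ≤ x := by linarith
  have h := psi_nonneg (Real.arccos_nonneg x) (Real.arccos_le_pi x)
    (by rw [Real.cos_arccos hx1 h2]; exact h1)
  rwa [Real.cos_arccos hx1 h2, Real.sin_arccos] at h

lemma gw_mono : MonotoneOn (fun x : ℝ => Real.arccos x / (1 - x))
    (Set.Icc (-(689/1000 : ℝ)) (689/1000)) := by
  have hd : ∀ x ∈ Set.Ioo (-(689/1000 : ℝ)) (689/1000),
      HasDerivAt (fun x : ℝ => Real.arccos x / (1 - x))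
        ((-(1 / Real.sqrt (1 - x ^ 2)) * (1 - x) - Real.arccos x * (-1)) / (1 - x) ^ 2) x := by
    intro x hx
    have hne : (1 : ℝ) - x ≠ 0 := by
      intro h; rw [sub_eq_zero] at h; linarith [hx.2]
    exact (Real.hasDerivAt_arccos (ne_of_gt (by linarith [hx.1] : (-1:ℝ) < x))
      (ne_of_lt (by linarith [hx.2] : x < 1))).div ((hasDerivAt_id x).const_sub 1) hne
  apply monotoneOn_of_deriv_nonneg (convex_Icc _ _)
  · apply ContinuousOn.div Real.continuous_arccos.continuousOn
      (by fun_prop)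
    intro x hx
    rw [Set.mem_Icc] at hx
    intro h
    rw [sub_eq_zero] at h
    linarith [hx.2]
  · intro x hx
    rw [interior_Icc] at hx
    exact (hd x hx).differentiableAt.differentiableWithinAt
  · intro x hx
    rw [interior_Icc] at hx
    rw [(hd x hx).deriv]
    have hx2 : x ^ 2 < 1 := by nlinarith [hx.1, hx.2]
    have hs : 0 < Real.sqrt (1 - x ^ 2) := Real.sqrt_pos.2 (by linarith)
    have hk := key_ineq hx.1.le (by linarith [hx.2] : x ≤ 1)
    have hnum : 0 ≤ -(1 / Real.sqrt (1 - x ^ 2)) * (1 - x) - Real.arccos x * (-1) := by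
      have h1 : (1 - x) / Real.sqrt (1 - x ^ 2) ≤ Real.arccos x := by
        rw [div_le_iff₀ hs]; linarith
      have h2 : -(1 / Real.sqrt (1 - x ^ 2)) * (1 - x)
          = -((1 - x) / Real.sqrt (1 - x ^ 2)) := by ring
      rw [h2]; linarith
    exact div_nonneg hnum (sq_nonneg _)

/-- For `0 ≤ ε ≤ 0.689` and `|x| ≤ ε`, `x < 1`, the Goemans–Williamson ratio function
attains its minimum on `[-ε, ε]` at the left endpoint: `g(x) ≥ g(-ε)`. -/
theorem stmt_2 (ε : ℝ) (hε0 : 0 ≤ ε) (hε : ε ≤ 0.689) (x : ℝ) (hx : |x| ≤ ε)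
    (hx1 : x < 1) :
    2 * arccos (-ε) / (π * (1 + ε)) ≤ 2 * arccos x / (π * (1 - x)) := by
  have hε' : ε ≤ 689/1000 := by norm_num at hε ⊢; linarith
  obtain ⟨hxl, hxr⟩ := abs_le.mp hx
  have hmem1 : -ε ∈ Set.Icc (-(689/1000 : ℝ)) (689/1000) :=
    Set.mem_Icc.2 ⟨by linarith, by linarith⟩
  have hmem2 : x ∈ Set.Icc (-(689/1000 : ℝ)) (689/1000) :=
    Set.mem_Icc.2 ⟨by linarith, by linarith⟩
  have h := gw_mono hmem1 hmem2 (by linarith)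
  simp only at h
  have h2 : Real.arccos (-ε) / (1 + ε) ≤ Real.arccos x / (1 - x) := by
    rw [show (1:ℝ) - -ε = 1 + ε by ring] at h
    exact h
  have hpi : (0:ℝ) < π := pi_pos
  calc 2 * arccos (-ε) / (π * (1 + ε)) = (2/π) * (arccos (-ε) / (1 + ε)) := by
        field_simp
    _ ≤ (2/π) * (arccos x / (1 - x)) :=
        mul_le_mul_of_nonneg_left h2 (by positivity)
    _ = 2 * arccos x / (π * (1 - x)) := by field_simp
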